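/- Let R be a commutative Noetherian ring and C, M finitely generated R-modules. Then M is 1-C-torsionfree if and only if there exists an injective R-homomorphism f : M → C₀ with C₀ a direct summand of a finite direct sum of copies of C such that the induced map Hom_R(f, C) : Hom_R(C₀, C) → Hom_R(M, C) is surjective. -/

import Mathlib

open CategoryTheory

noncomputable def ExtVanishes (A : Type) [CommRing A] (i : ℕ)
    (M : Type) [AddCommGroup M] [Module A M]
    (N : Type) [AddCommGroup N] [Module A N] : Prop :=
  Subsingleton ((((Ext A (ModuleCat.{0} A) i).obj (Opposite.op (ModuleCat.of A M))).obj
    (ModuleCat.of A N)))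

noncomputable def ExtMod (A : Type) [CommRing A] (i : ℕ)
    (M : Type) [AddCommGroup M] [Module A M]
    (N : Type) [AddCommGroup N] [Module A N] : ModuleCat.{0} A :=
  ((Ext A (ModuleCat.{0} A) i).obj (Opposite.op (ModuleCat.of A M))).obj (ModuleCat.of A N)

noncomputable def evalMap (A : Type) [CommRing A]
    (C : Type) [AddCommGroup C] [Module A C]
    (M : Type) [AddCommGroup M] [Module A M] :
    M →ₗ[A] ((M →ₗ[A] C) →ₗ[A] C) :=
  LinearMap.applyₗ

/-- `M` is `n`-`C`-torsionfree. (`n = 0` imposes no condition.) -/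
noncomputable def IsCTorsionfree (A : Type) [CommRing A]
    (C : Type) [AddCommGroup C] [Module A C]
    (M : Type) [AddCommGroup M] [Module A M] : ℕ → Prop
  | 0 => True
  | 1 => Function.Injective (evalMap A C M)
  | (m + 2) => Function.Bijective (evalMap A C M) ∧
      ∀ i : ℕ, 1 ≤ i → i ≤ m → ExtVanishes A i (M →ₗ[A] C) C

/-- `C` is an `n`-semidualizing `A`-module. -/
noncomputable def IsSemidualizing (A : Type) [CommRing A]
    (C : Type) [AddCommGroup C] [Module A C] : ℕ → Prop
  | 0 => True
  | 1 => Function.Injective (LinearMap.lsmul A C) ∧ ExtVanishes A 1 C C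
  | (m + 2) => Function.Bijective (LinearMap.lsmul A C) ∧
      ∀ i : ℕ, 1 ≤ i → i ≤ m + 2 → ExtVanishes A i C C

/-- `M` is `n`-`C`-spherical: `Ext^i(M,C) = 0` for `1 ≤ i ≤ n`. -/
noncomputable def IsCSpherical (A : Type) [CommRing A]
    (C : Type) [AddCommGroup C] [Module A C]
    (M : Type) [AddCommGroup M] [Module A M] (n : ℕ) : Prop :=
  ∀ i : ℕ, 1 ≤ i → i ≤ n → ExtVanishes A i M C

/-- `X` belongs to `add C`: it is a direct summand of a finite direct sum of copies of `C`. -/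
def MemAddC (A : Type) [CommRing A]
    (C : Type) [AddCommGroup C] [Module A C]
    (X : Type) [AddCommGroup X] [Module A X] : Prop :=
  ∃ (k : ℕ) (f : X →ₗ[A] (Fin k → C)) (g : (Fin k → C) →ₗ[A] X),
    g.comp f = LinearMap.id

/-- There is an exact sequence `0 → D_m → ⋯ → D_0 → M → 0` with all `D_i ∈ add C`. -/
noncomputable def HasCResolution (A : Type) [CommRing A]
    (C : Type) [AddCommGroup C] [Module A C]
    (M : Type) [AddCommGroup M] [Module A M] (m : ℕ) : Prop :=
  ∃ (D : ℕ → ModuleCat.{0} A) (d : ∀ i : ℕ, (D (i + 1)) →ₗ[A] (D i)) (ε : (D 0) →ₗ[A] M),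
    (∀ i : ℕ, i ≤ m → MemAddC A C (D i)) ∧
    (∀ i : ℕ, m < i → Subsingleton (D i)) ∧
    Function.Surjective ε ∧ Function.Exact (d 0) ε ∧
    (∀ i : ℕ, Function.Exact (d (i + 1)) (d i))

/-- `Cdim_A M`, the `add C`-resolution dimension of `M`, as an extended natural number. -/
noncomputable def cdim (A : Type) [CommRing A]
    (C : Type) [AddCommGroup C] [Module A C]
    (M : Type) [AddCommGroup M] [Module A M] : ℕ∞ :=
  sInf ((fun m : ℕ => (m : ℕ∞)) '' {m : ℕ | HasCResolution A C M m})

/-- `K` is a first syzygy of `M`: there is a short exact sequence `0 → K → P → M → 0`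
with `P` finitely generated projective. -/
def IsFirstSyzygy (A : Type) [CommRing A] (K M : ModuleCat.{0} A) : Prop :=
  ∃ (P : ModuleCat.{0} A) (ι : K →ₗ[A] P) (ε : P →ₗ[A] M),
    Module.Finite A P ∧ Module.Projective A P ∧
    Function.Injective ι ∧ Function.Exact ι ε ∧ Function.Surjective ε

/-- `K` is an `n`-th syzygy of `M`. -/
def IsNthSyzygy (A : Type) [CommRing A] : ℕ → ModuleCat.{0} A → ModuleCat.{0} A → Prop
  | 0, K, M => Nonempty (K ≃ₗ[A] M)
  | (n + 1), K, M => ∃ L : ModuleCat.{0} A, IsFirstSyzygy A K L ∧ IsNthSyzygy A n L M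

/-- Depth of a module over a Noetherian local ring:
`inf { i | Ext^i(k, N) ≠ 0 }`, as an extended natural number. -/
noncomputable def rdepth (A : Type) [CommRing A] [IsLocalRing A]
    (N : Type) [AddCommGroup N] [Module A N] : ℕ∞ :=
  sInf ((fun i : ℕ => (i : ℕ∞)) ''
    {i : ℕ | ¬ ExtVanishes A i (IsLocalRing.ResidueField A) N})

/-- `N` has finite injective dimension over `A`: it admits a finite injective coresolution. -/
noncomputable def HasFiniteInjDim (A : Type) [CommRing A]
    (N : Type) [AddCommGroup N] [Module A N] : Prop :=
  ∃ (m : ℕ) (D : ℕ → ModuleCat.{0} A) (δ : ∀ i : ℕ, (D i) →ₗ[A] (D (i + 1)))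
    (η : N →ₗ[A] (D 0)),
    (∀ i : ℕ, i ≤ m → Module.Injective A (D i)) ∧
    (∀ i : ℕ, m < i → Subsingleton (D i)) ∧
    Function.Injective η ∧ Function.Exact η (δ 0) ∧
    (∀ i : ℕ, Function.Exact (δ i) (δ (i + 1)))

/-- `N` has finite projective dimension over `A`: it admits a finite projective resolution. -/
noncomputable def HasFiniteProjDim (A : Type) [CommRing A]
    (N : Type) [AddCommGroup N] [Module A N] : Prop :=
  ∃ (m : ℕ) (D : ℕ → ModuleCat.{0} A) (d : ∀ i : ℕ, (D (i + 1)) →ₗ[A] (D i))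
    (ε : (D 0) →ₗ[A] N),
    (∀ i : ℕ, i ≤ m → Module.Projective A (D i)) ∧
    (∀ i : ℕ, m < i → Subsingleton (D i)) ∧
    Function.Surjective ε ∧ Function.Exact (d 0) ε ∧
    (∀ i : ℕ, Function.Exact (d (i + 1)) (d i))

/-- A regular local ring: a Noetherian local ring whose maximal ideal can be generated by
(Krull dimension)-many elements. -/
def IsRegularLocal (A : Type) [CommRing A] [IsLocalRing A] : Prop :=
  IsNoetherianRing A ∧ ∃ s : Finset A,
    Ideal.span (s : Set A) = IsLocalRing.maximalIdeal A ∧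
    (s.card : WithBot ℕ∞) = ringKrullDim A

/-- `M` admits an `n`-`C`-spherical approximation: a short exact sequence `0 → Y → X → M → 0`
with `X` finitely generated `n`-`C`-spherical and `Cdim Y < n`. -/
noncomputable def HasSphericalApprox (A : Type) [CommRing A]
    (C : Type) [AddCommGroup C] [Module A C]
    (M : Type) [AddCommGroup M] [Module A M] (n : ℕ) : Prop :=
  ∃ (X Y : ModuleCat.{0} A) (ι : ↥Y →ₗ[A] ↥X) (f : ↥X →ₗ[A] M),
    Module.Finite A ↥X ∧ Module.Finite A ↥Y ∧
    Function.Injective ι ∧ Function.Exact ι f ∧ Function.Surjective f ∧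
    IsCSpherical A C ↥X n ∧ cdim A C ↥Y < (n : ℕ∞)

/-- A finitely generated module `M` is `1`-`C`-torsionfree iff it admits an injective left
`add C`-approximation, i.e. an injective map `f : M → C₀` with `C₀ ∈ add C` such that
`Hom_R(f, C)` is surjective. -/
theorem statement3 (R : Type) [CommRing R] [IsNoetherianRing R]
    (C : Type) [AddCommGroup C] [Module R C] [Module.Finite R C]
    (M : Type) [AddCommGroup M] [Module R M] [Module.Finite R M] :
    IsCTorsionfree R C M 1 ↔
      ∃ (C₀ : ModuleCat.{0} R) (f : M →ₗ[R] ↥C₀),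
        MemAddC R C ↥C₀ ∧ Function.Injective f ∧
        Function.Surjective (LinearMap.lcomp R C f) := by
  constructor
  · intro htf
    -- Hom(M, C) is a finitely generated module over the Noetherian ring R
    have hNoeth : IsNoetherian R (M →ₗ[R] C) := inferInstance
    obtain ⟨n, s, hs⟩ := Module.Finite.exists_fin (R := R) (M := M →ₗ[R] C)
    refine ⟨ModuleCat.of R (Fin n → C), LinearMap.pi (fun i => s i), ⟨n, LinearMap.id,
      LinearMap.id, rfl⟩, ?_, ?_⟩
    · rw [injective_iff_map_eq_zero]
      intro x hx
      have hall : ∀ φ : M →ₗ[R] C, φ x = 0 := by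
        intro φ
        have hφ : φ ∈ Submodule.span R (Set.range s) := hs ▸ Submodule.mem_top
        induction hφ using Submodule.span_induction with
        | mem y hy =>
          obtain ⟨i, rfl⟩ := hy
          exact congrFun hx i
        | zero => simp
        | add y z _ _ hy hz => simp [hy, hz]
        | smul r y _ hy => simp [hy]
      have : evalMap R C M x = 0 := by
        ext φ; exact hall φ
      have h0 : evalMap R C M x = evalMap R C M 0 := by simp [this]
      exact htf h0
    · intro ψ
      have hψ : ψ ∈ Submodule.span R (Set.range s) := hs ▸ Submodule.mem_top
      rw [Submodule.mem_span_range_iff_exists_fun] at hψ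
      obtain ⟨c, hc⟩ := hψ
      refine ⟨∑ i, c i • LinearMap.proj i, ?_⟩
      rw [← hc]
      ext x
      simp only [LinearMap.lcomp_apply, LinearMap.sum_apply, LinearMap.coe_sum,
        Finset.sum_apply, LinearMap.smul_apply, LinearMap.coe_comp, Function.comp_apply,
        LinearMap.proj_apply, LinearMap.pi_apply]
  · rintro ⟨C₀, f, ⟨k, g, h, hgh⟩, hinj, hsurj⟩
    show Function.Injective (evalMap R C M)
    rw [injective_iff_map_eq_zero]
    intro x hx
    have hall : ∀ φ : M →ₗ[R] C, φ x = 0 := by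
      intro φ
      have := LinearMap.congr_fun hx φ
      simpa [evalMap] using this
    apply hinj
    rw [map_zero]
    have hfx : g (f x) = 0 := by
      funext i
      exact hall ((LinearMap.proj i).comp (g.comp f))
    have := congrArg h hfx
    rw [map_zero] at this
    calc f x = h (g (f x)) := by
          have := congrFun (congrArg DFunLike.coe hgh) (f x)
          exact this.symm
      _ = 0 := by rw [hfx, map_zero]
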